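/- If T₁, T₂ are sub-n-normal operators with minimal n-normal extensions S₁, S₂ respectively, and T₁ is unitarily equivalent to T₂, then S₁ is unitarily equivalent to S₂. In particular, any two minimal n-normal extensions of the same sub-n-normal operator are unitarily equivalent. -/

import Mathlib

open ContinuousLinearMap

section

variable {H K : Type*} [NormedAddCommGroup H] [InnerProductSpace ℂ H] [CompleteSpace H]
  [NormedAddCommGroup K] [InnerProductSpace ℂ K] [CompleteSpace K]

/-- `S ∈ B(K)` is an n-normal extension of `T ∈ B(H)` along the isometric embedding
`V : H → K` if `Sⁿ` is normal, `S` leaves (the image of) `H` invariant and `S|_H = T`. -/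
def IsNNormalExt (n : ℕ) (V : H →ₗᵢ[ℂ] K) (S : K →L[ℂ] K) (T : H →L[ℂ] H) : Prop :=
  IsStarNormal (S ^ n) ∧ ∀ x : H, S (V x) = V (T x)

/-- `S` is a *minimal* n-normal extension of `T` if no proper closed subspace of `K`
containing `H` and invariant under `S` yields, by restriction, an n-normal extension of `T`. -/
def IsMinimalNNormalExt (n : ℕ) (V : H →ₗᵢ[ℂ] K) (S : K →L[ℂ] K) (T : H →L[ℂ] H) : Prop :=
  IsNNormalExt n V S T ∧
  ∀ (M : Submodule ℂ K) (hM : IsClosed (M : Set K)) (hinv : ∀ y ∈ M, S y ∈ M)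
    (_ : ∀ x : H, V x ∈ M),
    (letI : CompleteSpace M := hM.completeSpace_coe
     IsStarNormal ((ContinuousLinearMap.codRestrict (S.comp M.subtypeL) M
        (fun y => hinv y y.2)) ^ n)) →
    M = ⊤

end

set_option maxHeartbeats 1000000 in
open NormedSpace in
/-- **Fuglede's theorem** in a C⋆-algebra (Rosenblum's proof). -/
theorem fuglede_commute {A : Type*} [NormedRing A] [StarRing A] [CStarRing A]
    [NormedAlgebra ℂ A] [StarModule ℂ A] [CompleteSpace A]
    {N X : A} (hN : IsStarNormal N) (hX : Commute X N) : Commute X (star N) := by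
  let +nondep : NormedAlgebra ℚ A := .restrictScalars ℚ ℂ A
  have hNN : Commute N (star N) := hN.star_comm_self.symm
  -- the skew-adjoint part
  set a : ℂ → A := fun z => z • star N - (starRingEnd ℂ z) • N with ha
  have hskew : ∀ z, a z ∈ skewAdjoint A := by
    intro z
    simp only [skewAdjoint.mem_iff, ha, star_sub, star_smul, star_star, RCLike.star_def,
      RingHom.coe_coe, starRingEnd_self_apply, neg_sub]
  have hcomm₁ : ∀ z w : ℂ, Commute (a z) (w • N) := fun z w =>
    ((hNN.symm.smul_left z).smul_right w).sub_left (((Commute.refl N).smul_left _).smul_right w)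
  have hsplit : ∀ z : ℂ, exp (z • star N) = exp (a z) * exp ((starRingEnd ℂ z) • N) := by
    intro z
    rw [← exp_add_of_commute (hcomm₁ z _)]
    congr 1
    simp [ha]
  have hsplit' : ∀ z : ℂ,
      exp (-(z • star N)) = exp (-((starRingEnd ℂ z) • N)) * exp (-(a z)) := by
    intro z
    rw [← exp_add_of_commute (((hcomm₁ z _).neg_left).neg_right).symm]
    congr 1
    simp [ha]
    abel
  have hXexp : ∀ w : ℂ, Commute X (exp (w • N)) := fun w => (hX.smul_right w).exp_right
  -- the function G
  set G : ℂ → A := fun z => exp (z • star N) * X * exp ((-z) • star N) with hG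
  have hGval : ∀ z, G z = exp (a z) * X * exp (-(a z)) := by
    intro z
    rw [hG]
    dsimp only
    rw [neg_smul, hsplit z, hsplit' z]
    have h1 : exp ((starRingEnd ℂ z) • N) * X = X * exp ((starRingEnd ℂ z) • N) :=
      (hXexp _).symm.eq
    have h2 : exp ((starRingEnd ℂ z) • N) * exp (-((starRingEnd ℂ z) • N)) = 1 := by
      rw [← exp_add_of_commute (Commute.refl _).neg_right, add_neg_cancel, exp_zero]
    rw [mul_assoc (exp (a z)) (exp ((starRingEnd ℂ z) • N)) X, h1]
    simp only [← mul_assoc]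
    rw [mul_assoc (exp (a z) * X) (exp ((starRingEnd ℂ z) • N))
      (exp (-((starRingEnd ℂ z) • N))), h2, mul_one]
  have hGbound : ∀ z, ‖G z‖ = ‖X‖ := by
    intro z
    rw [hGval z]
    have hu₁ : exp (a z) ∈ unitary A := exp_mem_unitary_of_mem_skewAdjoint (hskew z)
    have hu₂ : exp (-(a z)) ∈ unitary A :=
      exp_mem_unitary_of_mem_skewAdjoint (neg_mem (hskew z))
    rw [mul_assoc, CStarRing.norm_mem_unitary_mul _ hu₁, CStarRing.norm_mul_mem_unitary _ hu₂]
  have hexpdiff : Differentiable ℂ fun z : ℂ => exp (z • star N) := fun z =>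
    (hasDerivAt_exp_smul_const (star N) z).differentiableAt
  have hGdiff : Differentiable ℂ G := by
    exact ((hexpdiff.mul_const X).mul (hexpdiff.comp differentiable_neg))
  have hGbdd : Bornology.IsBounded (Set.range G) := by
    refine isBounded_iff_forall_norm_le.mpr ⟨‖X‖, ?_⟩
    rintro y ⟨z, rfl⟩
    exact (hGbound z).le
  have hGconst : ∀ z, G z = X := by
    intro z
    have := hGdiff.apply_eq_apply_of_bounded hGbdd z 0
    rw [this]
    simp [hG, exp_zero]
  have hmain : ∀ z : ℂ, exp (z • star N) * X = X * exp (z • star N) := by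
    intro z
    have h2 : exp ((-z) • star N) * exp (z • star N) = 1 := by
      rw [← exp_add_of_commute (((Commute.refl (star N)).smul_left _).smul_right _), neg_smul,
        neg_add_cancel, exp_zero]
    have := congrArg (fun y => y * exp (z • star N)) (hGconst z)
    rwa [hG, mul_assoc, h2, mul_one] at this
  -- differentiate at 0
  have hf : HasDerivAt (fun z : ℂ => exp (z • star N) * X)
      ((exp ((0 : ℂ) • star N) * star N) * X) 0 :=
    (hasDerivAt_exp_smul_const (star N) (0 : ℂ)).mul_const X
  have hg : HasDerivAt (fun z : ℂ => X * exp (z • star N))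
      (X * (exp ((0 : ℂ) • star N) * star N)) 0 :=
    (hasDerivAt_exp_smul_const (star N) (0 : ℂ)).const_mul X
  have heq : (fun z : ℂ => exp (z • star N) * X) = fun z : ℂ => X * exp (z • star N) :=
    funext hmain
  have := hf.unique (heq ▸ hg)
  simp only [zero_smul, exp_zero, one_mul] at this
  exact Commute.symm this

section AuxLemmas

variable {H K : Type*} [NormedAddCommGroup H] [InnerProductSpace ℂ H] [CompleteSpace H]
  [NormedAddCommGroup K] [InnerProductSpace ℂ K] [CompleteSpace K]

theorem adjoint_pow_eq (S : K →L[ℂ] K) (n : ℕ) :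
    (ContinuousLinearMap.adjoint S) ^ n = ContinuousLinearMap.adjoint (S ^ n) := by
  rw [← star_eq_adjoint, ← star_eq_adjoint, star_pow]

theorem commute_pow_adjoint_pow (S : K →L[ℂ] K) {n : ℕ} (h : IsStarNormal (S ^ n)) (j k : ℕ) :
    Commute (S ^ j) (((ContinuousLinearMap.adjoint S) ^ n) ^ k) := by
  have h1 : Commute S (S ^ n) := (Commute.refl S).pow_right n
  have h2 : Commute S (star (S ^ n)) := fuglede_commute h h1
  rw [star_pow, star_eq_adjoint] at h2
  exact h2.pow_pow j k

theorem apply_adjoint_pow_comm (S : K →L[ℂ] K) {n : ℕ} (h : IsStarNormal (S ^ n)) (k : ℕ)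
    (y : K) :
    S ((((ContinuousLinearMap.adjoint S) ^ n) ^ k) y)
      = (((ContinuousLinearMap.adjoint S) ^ n) ^ k) (S y) := by
  have hc := commute_pow_adjoint_pow S h 1 k
  rw [pow_one] at hc
  calc S ((((ContinuousLinearMap.adjoint S) ^ n) ^ k) y)
      = (S * ((ContinuousLinearMap.adjoint S) ^ n) ^ k) y := rfl
    _ = (((ContinuousLinearMap.adjoint S) ^ n) ^ k * S) y := by rw [hc.eq]
    _ = _ := rfl

theorem pow_apply_ext {V : H →ₗᵢ[ℂ] K} {S : K →L[ℂ] K} {T : H →L[ℂ] H}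
    (hext : ∀ x : H, S (V x) = V (T x)) (m : ℕ) (x : H) : (S ^ m) (V x) = V ((T ^ m) x) := by
  induction m with
  | zero => simp
  | succ m ih => rw [pow_succ', pow_succ', mul_apply_eq_comp, mul_apply_eq_comp, ih, hext]

theorem dense_of_minimal {n : ℕ} {V : H →ₗᵢ[ℂ] K} {S : K →L[ℂ] K} {T : H →L[ℂ] H}
    (h : IsMinimalNNormalExt n V S T) :
    Dense ((Submodule.span ℂ (Set.range fun p : ℕ × H =>
      (((ContinuousLinearMap.adjoint S) ^ n) ^ p.1) (V p.2)) : Submodule ℂ K) : Set K) := by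
  obtain ⟨⟨hnorm, hext⟩, hmin⟩ := h
  set A : K →L[ℂ] K := ContinuousLinearMap.adjoint S with hA
  set g : ℕ × H → K := fun p => ((A ^ n) ^ p.1) (V p.2) with hg
  set D : Submodule ℂ K := Submodule.span ℂ (Set.range g) with hD
  set M : Submodule ℂ K := D.topologicalClosure with hM
  rw [Submodule.dense_iff_topologicalClosure_eq_top]
  -- membership in D of generators
  have hgD : ∀ p : ℕ × H, g p ∈ D := fun p => Submodule.subset_span ⟨p, rfl⟩
  -- S-invariance of D
  have hSD : ∀ y ∈ D, S y ∈ D := by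
    intro y hy
    refine Submodule.span_induction ?_ ?_ ?_ ?_ hy
    · rintro _ ⟨⟨k, x⟩, rfl⟩
      have : S (g (k, x)) = g (k, T x) := by
        show S (((A ^ n) ^ k) (V x)) = ((A ^ n) ^ k) (V (T x))
        rw [apply_adjoint_pow_comm S hnorm, hext]
      rw [this]; exact hgD _
    · simp
    · intro a b _ _ ha hb; rw [map_add]; exact D.add_mem ha hb
    · intro c a _ ha; rw [map_smul]; exact D.smul_mem c ha
  -- A^n-invariance of D
  have hAD : ∀ y ∈ D, (A ^ n) y ∈ D := by
    intro y hy
    refine Submodule.span_induction ?_ ?_ ?_ ?_ hy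
    · rintro _ ⟨⟨k, x⟩, rfl⟩
      have : (A ^ n) (g (k, x)) = g (k + 1, x) := by
        show (A ^ n) (((A ^ n) ^ k) (V x)) = ((A ^ n) ^ (k + 1)) (V x)
        rw [pow_succ', mul_apply_eq_comp]
      rw [this]; exact hgD _
    · simp
    · intro a b _ _ ha hb; rw [map_add]; exact D.add_mem ha hb
    · intro c a _ ha; rw [map_smul]; exact D.smul_mem c ha
  -- closure invariance
  have hSM : ∀ y ∈ M, S y ∈ M := by
    intro y hy
    have h1 : Set.MapsTo S (D : Set K) (D : Set K) := hSD
    have h2 := h1.closure S.continuous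
    have : y ∈ closure (D : Set K) := hy
    exact h2 this
  have hAM : ∀ y ∈ M, (A ^ n) y ∈ M := by
    intro y hy
    have h1 : Set.MapsTo (A ^ n) (D : Set K) (D : Set K) := hAD
    have h2 := h1.closure ((A ^ n)).continuous
    have : y ∈ closure (D : Set K) := hy
    exact h2 this
  have hVM : ∀ x : H, V x ∈ M := by
    intro x
    have : V x = g (0, x) := by simp [hg]
    rw [this]
    exact D.le_topologicalClosure (hgD _)
  have hMc : IsClosed (M : Set K) := D.isClosed_topologicalClosure
  refine hmin M hMc hSM hVM ?_
  letI : CompleteSpace M := hMc.completeSpace_coe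
  set R : M →L[ℂ] M :=
    ContinuousLinearMap.codRestrict (S.comp M.subtypeL) M (fun y => hSM y y.2) with hR
  have hRcoe : ∀ (m : ℕ) (y : M), (((R ^ m) y : M) : K) = (S ^ m) (y : K) := by
    intro m
    induction m with
    | zero => intro y; simp
    | succ m ih =>
      intro y
      rw [pow_succ, mul_apply_eq_comp, pow_succ, mul_apply_eq_comp, ih (R y)]
      rfl
  set R' : M →L[ℂ] M :=
    ContinuousLinearMap.codRestrict ((A ^ n).comp M.subtypeL) M (fun y => hAM y y.2) with hR'
  have hadj : R' = ContinuousLinearMap.adjoint (R ^ n) := by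
    rw [ContinuousLinearMap.eq_adjoint_iff]
    intro x y
    rw [Submodule.coe_inner, Submodule.coe_inner]
    have h1 : ((R' x : M) : K) = (A ^ n) (x : K) := rfl
    rw [h1, hRcoe n y, hA, adjoint_pow_eq S n, ContinuousLinearMap.adjoint_inner_left]
  constructor
  rw [star_eq_adjoint, ← hadj]
  ext y
  have hL : (((R' * R ^ n) y : M) : K) = (A ^ n) ((S ^ n) (y : K)) := by
    rw [mul_apply_eq_comp]
    show ((A ^ n).comp M.subtypeL) ((R ^ n) y) = _
    rw [ContinuousLinearMap.comp_apply, Submodule.subtypeL_apply, hRcoe n y]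
  have hR'' : (((R ^ n * R') y : M) : K) = (S ^ n) ((A ^ n) (y : K)) := by
    rw [mul_apply_eq_comp, hRcoe n (R' y)]
    rfl
  rw [hL, hR'']
  have hcomm : Commute ((A : K →L[ℂ] K) ^ n) (S ^ n) := by
    have := hnorm.star_comm_self
    rw [star_pow, star_eq_adjoint] at this
    exact this
  calc (A ^ n) ((S ^ n) (y : K)) = ((A ^ n) * (S ^ n)) (y : K) := rfl
    _ = ((S ^ n) * (A ^ n)) (y : K) := by rw [hcomm.eq]
    _ = (S ^ n) ((A ^ n) (y : K)) := rfl


theorem inner_gen {n : ℕ} {V : H →ₗᵢ[ℂ] K} {S : K →L[ℂ] K} {T : H →L[ℂ] H}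
    (hnorm : IsStarNormal (S ^ n)) (hext : ∀ x : H, S (V x) = V (T x)) (j k : ℕ) (x y : H) :
    (inner ℂ ((((ContinuousLinearMap.adjoint S) ^ n) ^ j) (V x))
        ((((ContinuousLinearMap.adjoint S) ^ n) ^ k) (V y)) : ℂ)
      = inner ℂ ((T ^ (n * k)) x) ((T ^ (n * j)) y) := by
  have hpow : ∀ m : ℕ, ((ContinuousLinearMap.adjoint S) ^ n) ^ m
      = ContinuousLinearMap.adjoint (S ^ (n * m)) := by
    intro m; rw [← pow_mul, adjoint_pow_eq]
  rw [hpow j, hpow k, ContinuousLinearMap.adjoint_inner_left]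
  have hc : (S ^ (n * j)) ((ContinuousLinearMap.adjoint (S ^ (n * k))) (V y))
      = (ContinuousLinearMap.adjoint (S ^ (n * k))) ((S ^ (n * j)) (V y)) := by
    have hcc := commute_pow_adjoint_pow S hnorm (n * j) k
    rw [hpow k] at hcc
    calc (S ^ (n * j)) ((ContinuousLinearMap.adjoint (S ^ (n * k))) (V y))
        = ((S ^ (n * j)) * (ContinuousLinearMap.adjoint (S ^ (n * k)))) (V y) := rfl
      _ = ((ContinuousLinearMap.adjoint (S ^ (n * k))) * (S ^ (n * j))) (V y) := by rw [hcc.eq]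
      _ = _ := rfl
  rw [hc, ContinuousLinearMap.adjoint_inner_right, pow_apply_ext hext, pow_apply_ext hext,
    LinearIsometry.inner_map_map]

end AuxLemmas

theorem exists_intertwiner
    {H₁ K₁ H₂ K₂ : Type*}
    [NormedAddCommGroup H₁] [InnerProductSpace ℂ H₁] [CompleteSpace H₁]
    [NormedAddCommGroup K₁] [InnerProductSpace ℂ K₁] [CompleteSpace K₁]
    [NormedAddCommGroup H₂] [InnerProductSpace ℂ H₂] [CompleteSpace H₂]
    [NormedAddCommGroup K₂] [InnerProductSpace ℂ K₂] [CompleteSpace K₂]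
    (n : ℕ) (T₁ : H₁ →L[ℂ] H₁) (T₂ : H₂ →L[ℂ] H₂)
    (V₁ : H₁ →ₗᵢ[ℂ] K₁) (S₁ : K₁ →L[ℂ] K₁)
    (V₂ : H₂ →ₗᵢ[ℂ] K₂) (S₂ : K₂ →L[ℂ] K₂)
    (h₁ : IsMinimalNNormalExt n V₁ S₁ T₁) (h₂ : IsNNormalExt n V₂ S₂ T₂)
    (U : H₁ ≃ₗᵢ[ℂ] H₂) (hU : ∀ x : H₁, U (T₁ x) = T₂ (U x)) :
    ∃ W : K₁ →L[ℂ] K₂, (∀ y, ‖W y‖ = ‖y‖) ∧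
      (∀ p : ℕ × H₁, W ((((ContinuousLinearMap.adjoint S₁) ^ n) ^ p.1) (V₁ p.2))
          = (((ContinuousLinearMap.adjoint S₂) ^ n) ^ p.1) (V₂ (U p.2))) ∧
      ∀ y, W (S₁ y) = S₂ (W y) := by
  obtain ⟨hnorm₁, hext₁⟩ := h₁.1
  obtain ⟨hnorm₂, hext₂⟩ := h₂
  set g₁ : ℕ × H₁ → K₁ := fun p =>
    (((ContinuousLinearMap.adjoint S₁) ^ n) ^ p.1) (V₁ p.2) with hg₁
  set g₂ : ℕ × H₁ → K₂ := fun p =>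
    (((ContinuousLinearMap.adjoint S₂) ^ n) ^ p.1) (V₂ (U p.2)) with hg₂
  have hUpow : ∀ (m : ℕ) (x : H₁), U ((T₁ ^ m) x) = (T₂ ^ m) (U x) := by
    intro m
    induction m with
    | zero => intro x; simp
    | succ m ih => intro x; rw [pow_succ', pow_succ', mul_apply_eq_comp, mul_apply_eq_comp, hU, ih]
  have hgg : ∀ p q : ℕ × H₁, (inner ℂ (g₂ p) (g₂ q) : ℂ) = inner ℂ (g₁ p) (g₁ q) := by
    intro p q
    rw [hg₁, hg₂]
    dsimp only
    rw [inner_gen hnorm₁ hext₁ p.1 q.1 p.2 q.2, inner_gen hnorm₂ hext₂ p.1 q.1 (U p.2) (U q.2),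
      ← hUpow, ← hUpow, LinearIsometryEquiv.inner_map_map]
  set π₁ := Finsupp.linearCombination ℂ g₁ with hπ₁
  set π₂ := Finsupp.linearCombination ℂ g₂ with hπ₂
  have hππ : ∀ c d : (ℕ × H₁) →₀ ℂ, (inner ℂ (π₂ c) (π₂ d) : ℂ) = inner ℂ (π₁ c) (π₁ d) := by
    intro c d
    rw [hπ₁, hπ₂, Finsupp.linearCombination_apply, Finsupp.linearCombination_apply,
      Finsupp.linearCombination_apply, Finsupp.linearCombination_apply,
      Finsupp.sum, Finsupp.sum, Finsupp.sum, Finsupp.sum, sum_inner, sum_inner]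
    refine Finset.sum_congr rfl fun i _ => ?_
    rw [inner_sum, inner_sum]
    refine Finset.sum_congr rfl fun j _ => ?_
    rw [inner_smul_left, inner_smul_left, inner_smul_right, inner_smul_right, hgg i j]
  have hnormeq : ∀ c, ‖π₂ c‖ = ‖π₁ c‖ := by
    intro c
    rw [@norm_eq_sqrt_re_inner ℂ, @norm_eq_sqrt_re_inner ℂ, hππ c c]
  have hker : LinearMap.ker π₁ ≤ LinearMap.ker π₂ := by
    intro c hc
    rw [LinearMap.mem_ker] at hc ⊢
    have h0 := hnormeq c
    rw [hc, norm_zero] at h0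
    exact norm_eq_zero.mp h0
  set e := π₁.quotKerEquivRange with he
  set q := Submodule.liftQ (LinearMap.ker π₁) π₂ hker with hq
  set W₀ : ↥(LinearMap.range π₁) →ₗ[ℂ] K₂ :=
    q.comp (e.symm : ↥(LinearMap.range π₁) →ₗ[ℂ] _) with hW₀def
  have hW₀ : ∀ c : (ℕ × H₁) →₀ ℂ, W₀ ⟨π₁ c, LinearMap.mem_range_self π₁ c⟩ = π₂ c := by
    intro c
    show q (e.symm ⟨π₁ c, _⟩) = π₂ c
    rw [he, LinearMap.quotKerEquivRange_symm_apply_image, Submodule.mkQ_apply, hq,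
      Submodule.liftQ_apply]
  have hW₀norm : ∀ y : ↥(LinearMap.range π₁), ‖W₀ y‖ = ‖(y : K₁)‖ := by
    intro y
    obtain ⟨c, hc⟩ := y.2
    have hy : y = ⟨π₁ c, LinearMap.mem_range_self π₁ c⟩ := Subtype.ext hc.symm
    rw [hy, hW₀ c]
    exact hnormeq c
  set Wiso : ↥(LinearMap.range π₁) →ₗᵢ[ℂ] K₂ := ⟨W₀, hW₀norm⟩ with hWiso
  have hdense : Dense ((LinearMap.range π₁ : Submodule ℂ K₁) : Set K₁) := by
    rw [hπ₁, Finsupp.range_linearCombination]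
    exact dense_of_minimal h₁
  have hd : DenseRange ((LinearMap.range π₁).subtypeL : ↥(LinearMap.range π₁) →L[ℂ] K₁) := by
    have hr : Set.range ((LinearMap.range π₁).subtypeL)
        = ((LinearMap.range π₁ : Submodule ℂ K₁) : Set K₁) := Subtype.range_coe
    rw [DenseRange, hr]
    exact hdense
  have hui : IsUniformInducing ((LinearMap.range π₁).subtypeL :
      ↥(LinearMap.range π₁) →L[ℂ] K₁) := isometry_subtype_coe.isUniformInducing
  set W : K₁ →L[ℂ] K₂ :=
    (Wiso.toContinuousLinearMap).extend (LinearMap.range π₁).subtypeL with hWdef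
  have hWext : ∀ z : ↥(LinearMap.range π₁), W (z : K₁) = W₀ z := by
    intro z
    exact ContinuousLinearMap.extend_eq Wiso.toContinuousLinearMap
      hd hui z
  have hWgen : ∀ p : ℕ × H₁, W (g₁ p) = g₂ p := by
    intro p
    have h1 : g₁ p = π₁ (Finsupp.single p 1) := by
      rw [hπ₁, Finsupp.linearCombination_single, one_smul]
    have h2 : g₂ p = π₂ (Finsupp.single p 1) := by
      rw [hπ₂, Finsupp.linearCombination_single, one_smul]
    rw [h1, h2]
    exact (hWext ⟨π₁ (Finsupp.single p 1), LinearMap.mem_range_self _ _⟩).trans (hW₀ _)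
  have hWnorm : ∀ y, ‖W y‖ = ‖y‖ := by
    have hcl : IsClosed {y : K₁ | ‖W y‖ = ‖y‖} :=
      isClosed_eq (continuous_norm.comp W.continuous) continuous_norm
    intro y
    have hsub : ((LinearMap.range π₁ : Submodule ℂ K₁) : Set K₁) ⊆ {y : K₁ | ‖W y‖ = ‖y‖} := by
      rintro z hz
      have h3 := hWext ⟨z, hz⟩
      simp only [Set.mem_setOf_eq]
      rw [show z = ((⟨z, hz⟩ : ↥(LinearMap.range π₁)) : K₁) from rfl, h3]
      exact hW₀norm ⟨z, hz⟩
    exact hcl.closure_subset_iff.mpr hsub (hdense y)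
  have hWS : ∀ y, W (S₁ y) = S₂ (W y) := by
    have hcomp : W.comp S₁ = S₂.comp W := by
      refine ContinuousLinearMap.ext_on (s := Set.range g₁) ?_ ?_
      · exact dense_of_minimal h₁
      · rintro _ ⟨p, rfl⟩
        simp only [comp_apply]
        have hS₁g : S₁ (g₁ p) = g₁ (p.1, T₁ p.2) := by
          rw [hg₁]
          dsimp only
          rw [apply_adjoint_pow_comm S₁ hnorm₁, hext₁]
        rw [hS₁g, hWgen, hWgen]
        rw [hg₂]
        dsimp only
        rw [hU, apply_adjoint_pow_comm S₂ hnorm₂, hext₂]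
    intro y
    have := ContinuousLinearMap.ext_iff.mp hcomp y
    simpa using this
  exact ⟨W, hWnorm, hWgen, hWS⟩

/-- If `T₁` and `T₂` are unitarily equivalent sub-n-normal operators, with minimal n-normal
extensions `S₁` and `S₂` respectively, then `S₁` and `S₂` are unitarily equivalent. -/
theorem minimal_extensions_unitarily_equivalent
    {H₁ K₁ H₂ K₂ : Type*}
    [NormedAddCommGroup H₁] [InnerProductSpace ℂ H₁] [CompleteSpace H₁]
    [NormedAddCommGroup K₁] [InnerProductSpace ℂ K₁] [CompleteSpace K₁]
    [NormedAddCommGroup H₂] [InnerProductSpace ℂ H₂] [CompleteSpace H₂]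
    [NormedAddCommGroup K₂] [InnerProductSpace ℂ K₂] [CompleteSpace K₂]
    (n : ℕ) (T₁ : H₁ →L[ℂ] H₁) (T₂ : H₂ →L[ℂ] H₂)
    (V₁ : H₁ →ₗᵢ[ℂ] K₁) (S₁ : K₁ →L[ℂ] K₁)
    (V₂ : H₂ →ₗᵢ[ℂ] K₂) (S₂ : K₂ →L[ℂ] K₂)
    (h₁ : IsMinimalNNormalExt n V₁ S₁ T₁) (h₂ : IsMinimalNNormalExt n V₂ S₂ T₂)
    (U : H₁ ≃ₗᵢ[ℂ] H₂) (hU : ∀ x : H₁, U (T₁ x) = T₂ (U x)) :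
    ∃ W : K₁ ≃ₗᵢ[ℂ] K₂, ∀ y : K₁, W (S₁ y) = S₂ (W y) := by
  have hU' : ∀ x : H₂, U.symm (T₂ x) = T₁ (U.symm x) := by
    intro x
    have h3 := hU (U.symm x)
    rw [U.apply_symm_apply] at h3
    rw [← h3, U.symm_apply_apply]
  obtain ⟨W, hWn, hWg, hWS⟩ := exists_intertwiner n T₁ T₂ V₁ S₁ V₂ S₂ h₁ h₂.1 U hU
  obtain ⟨W', hW'n, hW'g, hW'S⟩ := exists_intertwiner n T₂ T₁ V₂ S₂ V₁ S₁ h₂ h₁.1 U.symm hU'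
  have hW'W : ∀ y : K₁, W' (W y) = y := by
    have hcomp : W'.comp W = ContinuousLinearMap.id ℂ K₁ := by
      refine ContinuousLinearMap.ext_on (s := Set.range fun p : ℕ × H₁ =>
        (((ContinuousLinearMap.adjoint S₁) ^ n) ^ p.1) (V₁ p.2)) (dense_of_minimal h₁) ?_
      rintro _ ⟨p, rfl⟩
      simp only [comp_apply, ContinuousLinearMap.id_apply]
      rw [hWg p]
      have h4 := hW'g (p.1, U p.2)
      simp only at h4
      rw [h4, U.symm_apply_apply]
    intro y
    have := ContinuousLinearMap.ext_iff.mp hcomp y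
    simpa using this
  have hWW' : ∀ y : K₂, W (W' y) = y := by
    have hcomp : W.comp W' = ContinuousLinearMap.id ℂ K₂ := by
      refine ContinuousLinearMap.ext_on (s := Set.range fun p : ℕ × H₂ =>
        (((ContinuousLinearMap.adjoint S₂) ^ n) ^ p.1) (V₂ p.2)) (dense_of_minimal h₂) ?_
      rintro _ ⟨p, rfl⟩
      simp only [comp_apply, ContinuousLinearMap.id_apply]
      rw [hW'g p]
      have h4 := hWg (p.1, U.symm p.2)
      simp only at h4
      rw [h4, U.apply_symm_apply]
    intro y
    have := ContinuousLinearMap.ext_iff.mp hcomp y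
    simpa using this
  refine ⟨{ toFun := W, map_add' := W.map_add, map_smul' := W.map_smul, invFun := W',
            left_inv := hW'W, right_inv := hWW', norm_map' := hWn }, ?_⟩
  intro y
  exact hWS y
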